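/- Let s be a complex number with Re(s) > −2 and let T(r) = r⁻⁷ Σ_{c=1,(c,r)=1}^{r} |S(r,c)|⁶. Then Σ_{k=0}^{∞} T(3^k)/3^{ks} = (1 − 3^{−(3s+6)})⁻¹ · (1 + 3^{−(2s+14)} Σ_{c=1,(c,3)=1}^{9} |S(9,c)|⁶ − 3^{−(3s+7)}), where the series converges absolutely. -/

import Mathlib

open Finset

noncomputable def e (x : ℝ) : ℂ := Complex.exp (2 * Real.pi * Complex.I * x)

noncomputable def S (q : ℕ) (b : ℤ) : ℂ :=
  ∑ m ∈ Finset.Icc 1 q, e ((b : ℝ) * (m : ℝ) ^ 3 / q)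

noncomputable def T (r : ℕ) : ℝ :=
  (r : ℝ)⁻¹ ^ 7 * ∑ c ∈ (Finset.Icc 1 r).filter (fun c => Nat.gcd c r = 1),
    ‖S r c‖ ^ 6


lemma e_add (x y : ℝ) : e (x + y) = e x * e y := by
  simp [e, mul_add, Complex.exp_add]

lemma e_int (n : ℤ) : e n = 1 := by
  simp [e]
  rw [show 2 * (Real.pi:ℂ) * Complex.I * n = n * (2 * Real.pi * Complex.I) by ring]
  exact Complex.exp_int_mul_two_pi_mul_I n

lemma e_eq_of (x y : ℝ) (n : ℤ) (h : x = y + n) : e x = e y := by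
  rw [h, e_add, e_int, mul_one]

lemma e_pow (x : ℝ) (n : ℕ) : e x ^ n = e (n * x) := by
  simp [e]
  rw [← Complex.exp_nat_mul]
  ring_nf

lemma e_eq_one_iff (a : ℤ) (q : ℕ) (hq : q ≠ 0) : e ((a : ℝ) / q) = 1 ↔ (q:ℤ) ∣ a := by
  constructor
  · intro h
    rw [e, Complex.exp_eq_one_iff] at h
    obtain ⟨n, hn⟩ := h
    have h2 : (2 * (Real.pi:ℂ) * Complex.I) ≠ 0 := by
      simp [Real.pi_ne_zero, Complex.I_ne_zero]
    rw [mul_comm (n:ℂ)] at hn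
    have := mul_left_cancel₀ h2 hn
    have hq' : (q:ℝ) ≠ 0 := Nat.cast_ne_zero.mpr hq
    have : (a:ℝ) / q = n := by exact_mod_cast this
    refine ⟨n, ?_⟩
    have h3 : (a:ℝ) = q * n := by field_simp at this; linarith
    exact_mod_cast h3
  · intro ⟨n, hn⟩
    have hq' : (q:ℝ) ≠ 0 := Nat.cast_ne_zero.mpr hq
    rw [show (a:ℝ)/q = (n:ℤ) by rw [hn]; push_cast; field_simp]
    exact e_int n


lemma sum_Icc_one {M : Type*} [AddCommGroup M] (f : ℕ → M) (n : ℕ) (h : f n = f 0) :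
    ∑ m ∈ Icc 1 n, f m = ∑ m ∈ range n, f m := by
  have h1 : ∑ m ∈ Icc 1 n, f m = ∑ i ∈ range n, f (1 + i) := by
    rw [show Icc 1 n = Ico 1 (n+1) by rw [Finset.Ico_add_one_right_eq_Icc], Finset.sum_Ico_eq_sum_range]
    simp
  have h2 : ∑ i ∈ range (n+1), f i = (∑ i ∈ range n, f (i+1)) + f 0 :=
    Finset.sum_range_succ' f n
  rw [Finset.sum_range_succ] at h2
  simp only [add_comm 1] at h1
  rw [h1]
  rw [h] at h2
  exact add_right_cancel h2.symm

lemma sum_range_mul {M : Type*} [AddCommMonoid M] (f : ℕ → M) (d N : ℕ) :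
    ∑ m ∈ range (d * N), f m = ∑ j ∈ range N, ∑ r ∈ range d, f (d * j + r) := by
  induction N with
  | zero => simp
  | succ N ih =>
    rw [Finset.sum_range_succ, ← ih, Nat.mul_succ, Finset.sum_range_add]

lemma e_zero : e 0 = 1 := by simp [e]

lemma S_range (q : ℕ) (hq : q ≠ 0) (b : ℤ) :
    S q b = ∑ m ∈ range q, e ((b : ℝ) * (m : ℝ) ^ 3 / q) := by
  apply sum_Icc_one (fun m => e ((b : ℝ) * (m : ℝ) ^ 3 / q)) q
  have hq' : (q:ℝ) ≠ 0 := Nat.cast_ne_zero.mpr hq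
  show e _ = e _
  rw [e_eq_of ((b : ℝ) * (q : ℝ) ^ 3 / q) ((b:ℝ) * (0:ℝ)^3 / q) (b * q^2) (by push_cast; field_simp; ring)]
  norm_num

lemma e_third_ne_one (a : ℤ) (ha : ¬(3:ℤ)∣a) : e ((a:ℝ)/3) ≠ 1 := by
  intro h
  exact ha ((e_eq_one_iff a 3 (by norm_num)).mp (by exact_mod_cast h))

lemma geom3 (a : ℤ) (ha : ¬(3:ℤ)∣a) (M : ℕ) : ∑ j ∈ range (3*M), e ((a:ℝ)/3) ^ j = 0 := by
  rw [geom_sum_eq (e_third_ne_one a ha)]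
  have h1 : e ((a:ℝ)/3) ^ (3*M) = 1 := by
    rw [e_pow, show ((3*M : ℕ):ℝ) * ((a:ℝ)/3) = ((a*M : ℤ):ℝ) by push_cast; ring, e_int]
  rw [h1]; simp

lemma S_one (b : ℤ) : S 1 b = 1 := by
  rw [S_range 1 one_ne_zero b]
  simp [e_zero]

lemma dvd3 (m : ℤ) : (3:ℤ) ∣ m^3 - m := by
  have h : ∀ z : ZMod 3, z^3 - z = 0 := by decide
  have h2 : ((m^3 - m : ℤ) : ZMod 3) = 0 := by push_cast; exact h _
  exact (ZMod.intCast_zmod_eq_zero_iff_dvd (m^3 - m) 3).mp h2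

lemma S_three (c : ℤ) (hc : ¬(3:ℤ)∣c) : S 3 c = 0 := by
  rw [S_range 3 (by norm_num) c]
  have h : ∀ m ∈ range 3, e ((c:ℝ)*(m:ℝ)^3/((3:ℕ):ℝ)) = e ((c:ℝ)/3)^m := by
    intro m hm
    obtain ⟨k, hk⟩ := dvd3 (m:ℤ)
    rw [e_pow]
    apply e_eq_of _ _ (c*k)
    have hk' : (m:ℝ)^3 - m = 3*k := by exact_mod_cast hk
    push_cast
    linear_combination (c:ℝ)/3 * hk'
  rw [Finset.sum_congr rfl h]
  have := geom3 c hc 1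
  norm_num at this
  exact this

lemma not_dvd_cr2 {c : ℤ} (hc : ¬(3:ℤ)∣c) {r : ℕ} (hr : ¬ 3 ∣ r) : ¬ (3:ℤ) ∣ c * (r:ℤ)^2 := by
  intro h
  rcases (Int.prime_three.dvd_mul).mp h with h1 | h1
  · exact hc h1
  · have := Int.prime_three.dvd_of_dvd_pow h1
    exact hr (by exact_mod_cast this)

lemma S_rec (v : ℕ) (c : ℤ) (hc : ¬(3:ℤ)∣c) : S (3^(v+3)) c = 9 * S (3^v) c := by
  have h30 : ∀ w : ℕ, ((3:ℕ)^w : ℝ) ≠ 0 := by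
    intro w; positivity
  set f : ℕ → ℂ := fun m => e ((c : ℝ) * (m : ℝ) ^ 3 / ((3^(v+3) : ℕ) : ℝ)) with hf
  have hS : S (3^(v+3)) c = ∑ m ∈ range (3^(v+3)), f m := S_range _ (by positivity) c
  -- split into multiples of 3 and non-multiples
  have hsplit : ∑ m ∈ range (3^(v+3)), f m =
      (∑ m ∈ range (3^(v+3)), if 3 ∣ m then f m else 0)
      + (∑ m ∈ range (3^(v+3)), if 3 ∣ m then 0 else f m) := by
    rw [← Finset.sum_add_distrib]
    apply Finset.sum_congr rfl
    intro m _
    by_cases h : 3 ∣ m <;> simp [h]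
  -- part 1
  have part1 : (∑ m ∈ range (3^(v+3)), if 3 ∣ m then f m else 0) = 9 * S (3^v) c := by
    have e1 : (3:ℕ)^(v+3) = 3 * 3^(v+2) := by ring
    rw [e1, sum_range_mul]
    have e2 : ∀ j ∈ range (3^(v+2)), (∑ r ∈ range 3, if 3 ∣ 3*j+r then f (3*j+r) else 0)
        = e ((c : ℝ) * (j : ℝ) ^ 3 / ((3^v : ℕ) : ℝ)) := by
      intro j _
      rw [Finset.sum_range_succ, Finset.sum_range_succ, Finset.sum_range_succ,
        Finset.sum_range_zero]
      rw [if_pos (by omega), if_neg (by omega), if_neg (by omega)]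
      simp only [hf, add_zero, zero_add]
      congr 1
      push_cast
      field_simp
      ring
    rw [Finset.sum_congr rfl e2]
    -- now periodic sum over range (3^(v+2)) of g t := e (c t³ / 3^v)
    have e3 : (3:ℕ)^(v+2) = 3^v * 9 := by ring
    rw [e3, sum_range_mul]
    have e4 : ∀ j ∈ range 9, ∀ r ∈ range (3^v),
        e ((c : ℝ) * ((3^v * j + r : ℕ) : ℝ) ^ 3 / ((3^v : ℕ) : ℝ))
        = e ((c : ℝ) * (r : ℝ) ^ 3 / ((3^v : ℕ) : ℝ)) := by
      intro j _ r _
      apply e_eq_of _ _ (c * (3*(r:ℤ)^2*j + 3*r*3^v*j^2 + 3^(2*v)*j^3))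
      push_cast
      field_simp
      ring
    calc ∑ j ∈ range 9, ∑ r ∈ range (3^v),
          e ((c : ℝ) * ((3^v * j + r : ℕ) : ℝ) ^ 3 / ((3^v : ℕ) : ℝ))
        = ∑ j ∈ range 9, ∑ r ∈ range (3^v), e ((c : ℝ) * (r : ℝ) ^ 3 / ((3^v : ℕ) : ℝ)) := by
          apply Finset.sum_congr rfl; intro j hj
          exact Finset.sum_congr rfl (e4 j hj)
      _ = 9 * S (3^v) c := by
          rw [Finset.sum_const, Finset.card_range, ← S_range _ (by positivity) c]
          simp [mul_comm]
  -- part 2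
  have part2 : (∑ m ∈ range (3^(v+3)), if 3 ∣ m then 0 else f m) = 0 := by
    have e1 : (3:ℕ)^(v+3) = 3^(v+1) * 9 := by ring
    rw [e1, sum_range_mul, Finset.sum_comm]
    apply Finset.sum_eq_zero
    intro r hr
    by_cases h3r : 3 ∣ r
    · apply Finset.sum_eq_zero
      intro j _
      rw [if_pos (Dvd.dvd.add (Dvd.dvd.mul_right (dvd_pow_self 3 (Nat.succ_ne_zero v)) j) h3r)]
    · have hterm : ∀ j ∈ range 9, (if 3 ∣ 3^(v+1)*j+r then (0:ℂ) else f (3^(v+1)*j+r))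
          = e ((c : ℝ) * (r : ℝ) ^ 3 / ((3^(v+3) : ℕ) : ℝ)) * e (((c * (r:ℤ)^2 : ℤ) : ℝ)/3) ^ j := by
        intro j _
        have hnd : ¬ 3 ∣ 3^(v+1)*j+r := by
          intro h
          exact h3r ((Nat.dvd_add_right (Dvd.dvd.mul_right (dvd_pow_self 3 (Nat.succ_ne_zero v)) j)).mp h)
        rw [if_neg hnd]
        rw [e_pow, ← e_add, hf]
        apply e_eq_of _ _ (c * ((r:ℤ)*j^2*3^v + j^3*3^(2*v)))
        push_cast
        field_simp
        ring
      rw [Finset.sum_congr rfl hterm, ← Finset.mul_sum]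
      rw [show (9:ℕ) = 3*3 by norm_num, geom3 _ (not_dvd_cr2 hc h3r) 3, mul_zero]
  rw [hS, hsplit, part1, part2, add_zero]

lemma S_pow3 (c : ℤ) (hc : ¬(3:ℤ)∣c) (u : ℕ) :
    S (3^(3*u)) c = 9^u ∧ S (3^(3*u+1)) c = 0 ∧ S (3^(3*u+2)) c = 9^u * S 9 c := by
  induction u with
  | zero =>
    refine ⟨?_, ?_, ?_⟩
    · norm_num [S_one]
    · norm_num [S_three c hc]
    · norm_num
  | succ u ih =>
    obtain ⟨h0, h1, h2⟩ := ih
    refine ⟨?_, ?_, ?_⟩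
    · rw [show 3*(u+1) = 3*u+3 by ring, S_rec _ c hc, h0]; ring
    · rw [show 3*(u+1)+1 = (3*u+1)+3 by ring, S_rec _ c hc, h1]; ring
    · rw [show 3*(u+1)+2 = (3*u+2)+3 by ring, S_rec _ c hc, h2]; ring

lemma gcd3_iff (x : ℕ) : Nat.gcd x 3 = 1 ↔ ¬ 3 ∣ x := by
  rw [Nat.gcd_comm, Nat.gcd_rec, Nat.dvd_iff_mod_eq_zero]
  have h3 : x % 3 = 0 ∨ x % 3 = 1 ∨ x % 3 = 2 := by omega
  rcases h3 with h | h | h <;> rw [h] <;> simp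

lemma S_nine_period (j r : ℕ) : S 9 ((9*j + r : ℕ) : ℤ) = S 9 (r : ℤ) := by
  unfold S
  apply Finset.sum_congr rfl
  intro m _
  apply e_eq_of _ _ (j * m^3)
  push_cast
  field_simp
  ring

noncomputable def G : ℕ → ℝ := fun c => if Nat.gcd c 3 = 1 then ‖S 9 c‖ ^ 6 else 0

lemma G_period (j r : ℕ) : G (9*j + r) = G r := by
  unfold G
  have h1 : Nat.gcd (9*j+r) 3 = 1 ↔ Nat.gcd r 3 = 1 := by
    rw [gcd3_iff, gcd3_iff, Nat.dvd_add_right (by omega)]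
  rw [S_nine_period]
  by_cases h : Nat.gcd r 3 = 1
  · rw [if_pos h, if_pos (h1.mpr h)]
  · rw [if_neg h, if_neg (fun hh => h (h1.mp hh))]

noncomputable def A : ℝ :=
  ∑ c ∈ (Finset.Icc 1 9).filter (fun c => Nat.gcd c 3 = 1), ‖S 9 c‖ ^ 6

lemma sum_G_range : ∑ r ∈ range 9, G r = A := by
  rw [A, Finset.sum_filter, ← sum_Icc_one G 9 (by norm_num [G])]
  exact Finset.sum_congr rfl (fun _ _ => rfl)

lemma sum_G_big (N : ℕ) : ∑ c ∈ range (9*N), G c = N * A := by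
  rw [show 9*N = 9*N by rfl, sum_range_mul]
  have : ∀ j ∈ range N, ∑ r ∈ range 9, G (9*j+r) = A := by
    intro j _
    rw [Finset.sum_congr rfl (fun r _ => G_period j r), sum_G_range]
  rw [Finset.sum_congr rfl this, Finset.sum_const, Finset.card_range, nsmul_eq_mul]


lemma coprime_pow3 {c k : ℕ} (hk : 0 < k) : Nat.gcd c (3^k) = 1 ↔ Nat.gcd c 3 = 1 :=
  Nat.coprime_pow_right_iff hk c 3

lemma int_not_dvd {c : ℕ} (h : Nat.gcd c 3 = 1) : ¬ (3:ℤ) ∣ (c:ℤ) := by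
  intro hh
  exact (gcd3_iff c).mp h (by exact_mod_cast hh)

lemma T_one : T 1 = 1 := by
  rw [T]
  norm_num [S_one]

lemma T_mod1 (u : ℕ) : T (3^(3*u+1)) = 0 := by
  rw [T]
  have h : ∑ c ∈ (Finset.Icc 1 (3^(3*u+1))).filter (fun c => Nat.gcd c (3^(3*u+1)) = 1),
      ‖S (3^(3*u+1)) c‖ ^ 6 = 0 := by
    apply Finset.sum_eq_zero
    intro c hcm
    rw [Finset.mem_filter] at hcm
    have h3 := int_not_dvd ((coprime_pow3 (by omega)).mp hcm.2)
    rw [(S_pow3 c h3 u).2.1]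
    simp
  rw [h, mul_zero]

lemma T_mod2 (u : ℕ) : T (3^(3*u+2)) = A / 3^(6*u+14) := by
  rw [T]
  have hsum : ∑ c ∈ (Finset.Icc 1 (3^(3*u+2))).filter (fun c => Nat.gcd c (3^(3*u+2)) = 1),
      ‖S (3^(3*u+2)) c‖ ^ 6 = 3^(12*u) * ∑ c ∈ Finset.Icc 1 (3^(3*u+2)), G c := by
    rw [Finset.sum_filter, Finset.mul_sum]
    apply Finset.sum_congr rfl
    intro c _
    by_cases h : Nat.gcd c 3 = 1
    · rw [if_pos ((coprime_pow3 (by omega)).mpr h), G, if_pos h]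
      rw [(S_pow3 c (int_not_dvd h) u).2.2, norm_mul, mul_pow, norm_pow,
        show ‖(9:ℂ)‖ = 9 by norm_num,
        show ((9:ℝ)^u)^6 = 3^(12*u) by
          rw [← pow_mul, show (9:ℝ)=3^2 by norm_num, ← pow_mul]; congr 1; ring]
    · rw [if_neg (fun hh => h ((coprime_pow3 (by omega)).mp hh)), G, if_neg h, mul_zero]
  rw [hsum]
  have hIcc : ∑ c ∈ Finset.Icc 1 (3^(3*u+2)), G c = ∑ c ∈ range (3^(3*u+2)), G c := by
    apply sum_Icc_one
    rw [G, G, if_neg, if_neg]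
    · norm_num
    · rw [gcd3_iff]
      simp [dvd_pow_self 3 (show 3*u+2 ≠ 0 by omega)]
  rw [hIcc, show (3:ℕ)^(3*u+2) = 9 * 3^(3*u) by ring, sum_G_big]
  push_cast
  rw [show ((9:ℝ) * 3^(3*u))⁻¹^7 * (3^(12*u) * (3^(3*u) * A)) = A * (3^(15*u) / (3^14 * 3^(21*u))) by
    rw [show (3:ℝ)^14 = 9^7 by norm_num]; ring]
  rw [mul_div_assoc', div_eq_div_iff (by positivity) (by positivity)]
  ring

lemma T_mod0 (u : ℕ) : T (3^(3*u+3)) = 2 / 3^(6*u+7) := by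
  rw [T]
  set K : ℝ := (3:ℝ)^(12*u+12) with hK
  set G3 : ℕ → ℝ := fun c => if Nat.gcd c 3 = 1 then K else 0 with hG3
  have hsum : ∑ c ∈ (Finset.Icc 1 (3^(3*u+3))).filter (fun c => Nat.gcd c (3^(3*u+3)) = 1),
      ‖S (3^(3*u+3)) c‖ ^ 6 = ∑ c ∈ Finset.Icc 1 (3^(3*u+3)), G3 c := by
    rw [Finset.sum_filter]
    apply Finset.sum_congr rfl
    intro c _
    by_cases h : Nat.gcd c 3 = 1
    · rw [if_pos ((coprime_pow3 (by omega)).mpr h), hG3]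
      simp only [if_pos h]
      rw [show 3*u+3 = 3*(u+1) by ring, (S_pow3 c (int_not_dvd h) (u+1)).1, norm_pow,
        show ‖(9:ℂ)‖ = 9 by norm_num,
        show ((9:ℝ)^(u+1))^6 = 3^(12*u+12) by
          rw [← pow_mul, show (9:ℝ)=3^2 by norm_num, ← pow_mul]; congr 1; ring]
    · rw [if_neg (fun hh => h ((coprime_pow3 (by omega)).mp hh)), hG3]
      simp only [if_neg h]
  rw [hsum]
  have hIcc : ∑ c ∈ Finset.Icc 1 (3^(3*u+3)), G3 c = ∑ c ∈ range (3^(3*u+3)), G3 c := by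
    apply sum_Icc_one
    rw [hG3]
    simp only
    rw [if_neg, if_neg]
    · norm_num
    · rw [gcd3_iff]
      simp [dvd_pow_self 3 (show 3*u+3 ≠ 0 by omega)]
  rw [hIcc, show (3:ℕ)^(3*u+3) = 3 * 3^(3*u+2) by ring, sum_range_mul]
  have hin : ∀ j ∈ range (3^(3*u+2)), ∑ r ∈ range 3, G3 (3*j+r) = 2*K := by
    intro j _
    rw [Finset.sum_range_succ, Finset.sum_range_succ, Finset.sum_range_succ, Finset.sum_range_zero]
    rw [hG3]
    simp only
    rw [if_neg (by rw [gcd3_iff]; simp), if_pos (by rw [gcd3_iff]; omega),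
      if_pos (by rw [gcd3_iff]; omega)]
    ring
  rw [Finset.sum_congr rfl hin, Finset.sum_const, Finset.card_range, nsmul_eq_mul, hK]
  push_cast
  rw [show ((3:ℝ) * 3^(3*u+2))⁻¹^7 * (3^(3*u+2) * (2 * 3^(12*u+12)))
      = 2 * (3^(15*u+14) / 3^(21*u+21)) by ring]
  rw [mul_div_assoc', div_eq_div_iff (by positivity) (by positivity)]
  ring

lemma term_eq (R : ℝ) (n : ℕ) (w : ℂ) :
    ((R / 3^n : ℝ) : ℂ) / (3:ℂ)^w = (R:ℂ) * (3:ℂ)^(-(n:ℂ) - w) := by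
  have h3 : (3:ℂ) ≠ 0 := by norm_num
  push_cast
  rw [div_div, ← Complex.cpow_natCast 3 n, ← Complex.cpow_add _ _ h3, div_eq_mul_inv,
    ← Complex.cpow_neg]
  congr 1
  ring

theorem local_factor_three (s : ℂ) (hs : -2 < s.re) :
    Summable (fun k : ℕ => ‖(T (3 ^ k) : ℂ) / (3 : ℂ) ^ ((k : ℂ) * s)‖) ∧
    (∑' k : ℕ, (T (3 ^ k) : ℂ) / (3 : ℂ) ^ ((k : ℂ) * s)) =
      (1 - (3 : ℂ) ^ (-(3 * s + 6)))⁻¹ *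
        (1 + (3 : ℂ) ^ (-(2 * s + 14)) *
            ∑ c ∈ (Finset.Icc 1 9).filter (fun c => Nat.gcd c 3 = 1),
              (‖S 9 c‖ ^ 6 : ℂ)
          - (3 : ℂ) ^ (-(3 * s + 7))) := by
  have h3 : (3:ℂ) ≠ 0 := by norm_num
  set q : ℂ := (3:ℂ) ^ (-(3*s+6)) with hqdef
  have hqabs : ‖q‖ < 1 := by
    rw [hqdef, show (3:ℂ) = ((3:ℝ):ℂ) by norm_num,
      Complex.norm_cpow_eq_rpow_re_of_pos (by norm_num)]
    apply Real.rpow_lt_one_of_one_lt_of_neg (by norm_num)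
    simp only [Complex.neg_re, Complex.add_re, Complex.mul_re, Complex.ofReal_re,
      Complex.ofReal_im, Complex.re_ofNat, Complex.im_ofNat]
    norm_num
    linarith
  set B : ℂ := (A:ℂ) * (3:ℂ)^(-(2*s+14)) with hB
  set D : ℂ := 2 * (3:ℂ)^(-(3*s+7)) with hD
  set a0 : ℕ → ℂ := fun k => if k = 0 then 1 else 0 with ha0
  set a2 : ℕ → ℂ := fun k => if k % 3 = 2 then B * q^(k/3) else 0 with ha2
  set a3 : ℕ → ℂ := fun k => if k % 3 = 0 ∧ k ≠ 0 then D * q^(k/3-1) else 0 with ha3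
  -- pointwise decomposition
  have key : ∀ k : ℕ, (T (3 ^ k) : ℂ) / (3 : ℂ) ^ ((k : ℂ) * s) = a0 k + a2 k + a3 k := by
    intro k
    have hcases : k = 0 ∨ (∃ u, k = 3*u+1) ∨ (∃ u, k = 3*u+2) ∨ (∃ u, k = 3*u+3) := by
      by_cases h0 : k = 0
      · left; exact h0
      · right
        have h : k % 3 = 0 ∨ k % 3 = 1 ∨ k % 3 = 2 := by omega
        rcases h with h|h|h
        · right; right; exact ⟨k/3 - 1, by omega⟩
        · left; exact ⟨k/3, by omega⟩
        · right; left; exact ⟨k/3, by omega⟩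
    rcases hcases with rfl | ⟨u, rfl⟩ | ⟨u, rfl⟩ | ⟨u, rfl⟩
    · rw [ha0, ha2, ha3]
      simp only [pow_zero, T_one, Nat.cast_zero, zero_mul, Complex.cpow_zero]
      norm_num
    · rw [T_mod1, ha0, ha2, ha3]
      simp only
      rw [if_neg (by omega), if_neg (by omega), if_neg (by omega)]
      norm_num
    · rw [T_mod2, ha0, ha2, ha3]
      simp only
      rw [if_neg (by omega), if_pos (by omega), if_neg (by omega)]
      rw [term_eq]
      rw [show (3*u+2)/3 = u by omega, hB, hqdef, ← Complex.cpow_nat_mul, mul_assoc,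
        ← Complex.cpow_add _ _ h3]
      rw [add_zero, zero_add]
      congr 1
      push_cast
      ring
    · rw [T_mod0, ha0, ha2, ha3]
      simp only
      rw [if_neg (by omega), if_neg (by omega), if_pos (by omega)]
      rw [term_eq]
      rw [show (3*u+3)/3 - 1 = u by omega, hD, hqdef, ← Complex.cpow_nat_mul, mul_assoc,
        ← Complex.cpow_add _ _ h3]
      rw [add_zero, zero_add]
      congr 1
      push_cast
      ring
  -- summability of the pieces
  have hS0 : Summable a0 := by
    apply summable_of_ne_finset_zero (s := {0})
    intro b hb
    simp only [Finset.mem_singleton] at hb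
    rw [ha0]; simp [hb]
  have hinj2 : Function.Injective (fun u : ℕ => 3*u+2) := by intro a b h; simp only at h; omega
  have hz2 : ∀ x ∉ Set.range (fun u : ℕ => 3*u+2), a2 x = 0 := by
    intro x hx
    rw [ha2]
    simp only
    rw [if_neg]
    intro h2
    exact hx ⟨x/3, by simp only; omega⟩
  have hcomp2 : (a2 ∘ (fun u : ℕ => 3*u+2)) = fun u => B * q^u := by
    funext u
    simp only [Function.comp, ha2]
    rw [if_pos (by omega), show (3*u+2)/3 = u by omega]
  have hgeom : Summable (fun u : ℕ => B * q^u) :=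
    (summable_geometric_of_norm_lt_one hqabs).mul_left B
  have hS2 : Summable a2 := by
    rw [← Function.Injective.summable_iff hinj2 hz2, hcomp2]
    exact hgeom
  have hinj3 : Function.Injective (fun u : ℕ => 3*u+3) := by intro a b h; simp only at h; omega
  have hz3 : ∀ x ∉ Set.range (fun u : ℕ => 3*u+3), a3 x = 0 := by
    intro x hx
    rw [ha3]
    simp only
    rw [if_neg]
    intro h2
    exact hx ⟨x/3 - 1, by simp only; omega⟩
  have hcomp3 : (a3 ∘ (fun u : ℕ => 3*u+3)) = fun u => D * q^u := by
    funext u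
    simp only [Function.comp, ha3]
    rw [if_pos (by omega), show (3*u+3)/3 - 1 = u by omega]
  have hgeom3' : Summable (fun u : ℕ => D * q^u) :=
    (summable_geometric_of_norm_lt_one hqabs).mul_left D
  have hS3 : Summable a3 := by
    rw [← Function.Injective.summable_iff hinj3 hz3, hcomp3]
    exact hgeom3'
  have hStot : Summable (fun k : ℕ => (T (3 ^ k) : ℂ) / (3 : ℂ) ^ ((k : ℂ) * s)) := by
    have := (hS0.add hS2).add hS3
    apply this.congr
    intro k
    exact (key k).symm
  constructor
  · have := summable_norm_iff.mpr hStot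
    apply this.congr
    intro k
    rfl
  · -- tsum computation
    have ht0 : ∑' k, a0 k = 1 := by
      apply tsum_eq_single 0
      intro b hb
      rw [ha0]; simp [hb]
    have ht2 : ∑' k, a2 k = B * (1-q)⁻¹ := by
      rw [← Function.Injective.tsum_eq hinj2 (fun x hx => by
        by_contra hr; exact hx (hz2 x hr))]
      have : ∀ u : ℕ, a2 (3*u+2) = B * q^u := fun u => congrFun hcomp2 u
      rw [tsum_congr this, tsum_mul_left, tsum_geometric_of_norm_lt_one hqabs]
    have ht3 : ∑' k, a3 k = D * (1-q)⁻¹ := by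
      rw [← Function.Injective.tsum_eq hinj3 (fun x hx => by
        by_contra hr; exact hx (hz3 x hr))]
      have : ∀ u : ℕ, a3 (3*u+3) = D * q^u := fun u => congrFun hcomp3 u
      rw [tsum_congr this, tsum_mul_left, tsum_geometric_of_norm_lt_one hqabs]
    have htot : (∑' k : ℕ, (T (3 ^ k) : ℂ) / (3 : ℂ) ^ ((k : ℂ) * s))
        = 1 + B * (1-q)⁻¹ + D * (1-q)⁻¹ := by
      rw [tsum_congr key, Summable.tsum_add (hS0.add hS2) hS3, Summable.tsum_add hS0 hS2, ht0, ht2, ht3]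
    rw [htot]
    have hA : ∑ c ∈ (Finset.Icc 1 9).filter (fun c => Nat.gcd c 3 = 1),
        (‖S 9 c‖ ^ 6 : ℂ) = (A:ℂ) := by
      rw [A]; push_cast; rfl
    rw [hA]
    have hq3 : q = 3 * (3:ℂ)^(-(3*s+7)) := by
      rw [hqdef, show -(3*s+6) = 1 + -(3*s+7) by ring, Complex.cpow_add _ _ h3,
        Complex.cpow_one]
    have h1q : (1:ℂ) - q ≠ 0 := by
      intro h
      have : q = 1 := by linear_combination -h
      rw [this] at hqabs
      simp at hqabs
    rw [hB, hD]
    field_simp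
    rw [hq3]
    ring
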